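/- Let γ be a rank-one projector and Γ a density matrix on ℂⁿ, and set α = tr((I−γ)Γ) = 1 − tr(γΓ). Then α ≤ ‖Γ − γ‖₁ ≤ 2·√(2α), where ‖X‖₁ denotes the trace norm of X. -/

import Mathlib

open Matrix ComplexOrder

/-- The positive semidefinite square root of a positive semidefinite matrix
(removed from Mathlib; restored with its old definition). -/
noncomputable def Matrix.PosSemidef.sqrt {n 𝕜 : Type*} [Fintype n] [DecidableEq n] [RCLike 𝕜]
    {A : Matrix n n 𝕜} (hA : A.PosSemidef) : Matrix n n 𝕜 :=
  hA.1.eigenvectorUnitary.1 * diagonal ((↑) ∘ (√·) ∘ hA.1.eigenvalues) *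
  (star hA.1.eigenvectorUnitary : Matrix n n 𝕜)

/-- The trace norm of a matrix: `‖X‖₁ = tr √(XᴴX)`, the sum of the singular values. -/
noncomputable def traceNorm {n : ℕ} (X : Matrix (Fin n) (Fin n) ℂ) : ℝ :=
  ((Matrix.posSemidef_conjTranspose_mul_self X).sqrt.trace).re

section Helpers

variable {m : Type*} [Fintype m] [DecidableEq m]

private lemma trace_conj_diag (U : Matrix.unitaryGroup m ℂ) (d : m → ℂ) :
    ((U : Matrix m m ℂ) * diagonal d * star (U : Matrix m m ℂ)).trace = ∑ i, d i := by
  rw [trace_mul_cycle, (Matrix.mem_unitaryGroup_iff').mp U.2, one_mul, trace_diagonal]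

private lemma conj_mul_conj (U : Matrix.unitaryGroup m ℂ) (P Q : Matrix m m ℂ) :
    ((U : Matrix m m ℂ) * P * star (U : Matrix m m ℂ)) *
      ((U : Matrix m m ℂ) * Q * star (U : Matrix m m ℂ))
    = (U : Matrix m m ℂ) * (P * Q) * star (U : Matrix m m ℂ) := by
  have h1 : star (U : Matrix m m ℂ) * (U : Matrix m m ℂ) = 1 :=
    (Matrix.mem_unitaryGroup_iff').mp U.2
  simp only [mul_assoc]
  rw [← mul_assoc (star (U : Matrix m m ℂ)) (U : Matrix m m ℂ) (Q * star (U : Matrix m m ℂ)),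
    h1, one_mul]

private lemma conj_diag_mul (U : Matrix.unitaryGroup m ℂ) (d e : m → ℂ) :
    ((U : Matrix m m ℂ) * diagonal d * star (U : Matrix m m ℂ)) *
      ((U : Matrix m m ℂ) * diagonal e * star (U : Matrix m m ℂ))
    = (U : Matrix m m ℂ) * diagonal (fun i => d i * e i) * star (U : Matrix m m ℂ) := by
  rw [conj_mul_conj, diagonal_mul_diagonal]

private lemma conj_diag_posSemidef (U : Matrix.unitaryGroup m ℂ) {d : m → ℂ}
    (hd : ∀ i, 0 ≤ d i) :
    ((U : Matrix m m ℂ) * diagonal d * star (U : Matrix m m ℂ)).PosSemidef := by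
  have := (Matrix.posSemidef_diagonal_iff.mpr hd).mul_mul_conjTranspose_same
    (U : Matrix m m ℂ)
  simpa [Matrix.star_eq_conjTranspose] using this

private lemma herm_trace {A : Matrix m m ℂ} (hA : A.IsHermitian) :
    A.trace = ∑ i, (hA.eigenvalues i : ℂ) := by
  conv_lhs => rw [hA.spectral_theorem, Unitary.conjStarAlgAut_apply]
  rw [trace_conj_diag hA.eigenvectorUnitary (RCLike.ofReal ∘ hA.eigenvalues)]
  rfl

private lemma herm_sq_trace {A : Matrix m m ℂ} (hA : A.IsHermitian) :
    (A * A).trace = ∑ i, ((hA.eigenvalues i : ℂ)) ^ 2 := by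
  conv_lhs => rw [hA.spectral_theorem, Unitary.conjStarAlgAut_apply]
  rw [conj_diag_mul, trace_conj_diag]
  simp [pow_two]

private lemma psd_eq_sqrt_of_sq_eq {S B : Matrix m m ℂ} (hS : S.PosSemidef)
    (hB : B.PosSemidef) (h : S ^ 2 = B) : S = hB.sqrt := by
  have hsa : IsSelfAdjoint S := hS.1
  have hspec : ∀ x ∈ spectrum ℝ S, 0 ≤ x := by
    intro x hx
    rw [hS.1.spectrum_real_eq_range_eigenvalues] at hx
    obtain ⟨i, rfl⟩ := hx
    exact hS.eigenvalues_nonneg i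
  have h1 : hB.sqrt = cfc Real.sqrt B := by
    rw [IsHermitian.cfc_eq hB.1]
    simp [Matrix.PosSemidef.sqrt, IsHermitian.cfc]
  rw [h1, ← h, ← cfc_pow_id (R := ℝ) S 2, ← cfc_comp Real.sqrt (· ^ 2) S]
  conv_lhs => rw [← cfc_id ℝ S]
  refine cfc_congr fun x hx => ?_
  simp [Real.sqrt_sq (hspec x hx)]

private lemma traceNorm_herm {k : ℕ} {A : Matrix (Fin k) (Fin k) ℂ} (hA : A.IsHermitian) :
    traceNorm A = ∑ i, |hA.eigenvalues i| := by
  set U := hA.eigenvectorUnitary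
  set S : Matrix (Fin k) (Fin k) ℂ :=
    (U : Matrix (Fin k) (Fin k) ℂ) * diagonal (fun i => Complex.ofReal |hA.eigenvalues i|) *
      star (U : Matrix (Fin k) (Fin k) ℂ) with hSdef
  have hS : S.PosSemidef := conj_diag_posSemidef U fun i => by
    exact_mod_cast Complex.zero_le_real.mpr (abs_nonneg _)
  have hsq : S ^ 2 = Aᴴ * A := by
    rw [hA.eq, pow_two, hSdef, conj_diag_mul]
    conv_rhs => rw [hA.spectral_theorem, Unitary.conjStarAlgAut_apply, conj_diag_mul]
    have habs : (fun i => Complex.ofReal |hA.eigenvalues i| * Complex.ofReal |hA.eigenvalues i|)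
        = fun i => (RCLike.ofReal ∘ hA.eigenvalues) i * (RCLike.ofReal ∘ hA.eigenvalues) i := by
      funext i
      rw [← Complex.ofReal_mul, abs_mul_abs_self]
      simp [Function.comp, RCLike.ofReal]
    rw [habs]
  have := psd_eq_sqrt_of_sq_eq hS (Matrix.posSemidef_conjTranspose_mul_self A) hsq
  rw [traceNorm, ← this, trace_conj_diag]
  rw [Complex.re_sum]
  simp

private lemma proj_mulVec {γ : Matrix m m ℂ} (hherm : γᴴ = γ) (hidem : γ * γ = γ)
    (htr : γ.trace = 1) : ∃ ψ : m → ℂ, ∀ x, γ *ᵥ x = (star ψ ⬝ᵥ x) • ψ := by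
  have hγ : γ.IsHermitian := hherm
  set ν := hγ.eigenvalues with hν
  have h01 : ∀ j, ν j = 0 ∨ ν j = 1 := by
    intro j
    have hb := hγ.mulVec_eigenvectorBasis j
    have hb2 : γ *ᵥ (γ *ᵥ ⇑(hγ.eigenvectorBasis j)) = (ν j * ν j) • ⇑(hγ.eigenvectorBasis j) := by
      rw [hb, Matrix.mulVec_smul, hb, smul_smul]
    rw [Matrix.mulVec_mulVec, hidem, hb] at hb2
    have hbne : ⇑(hγ.eigenvectorBasis j) ≠ 0 := by
      intro h
      exact hγ.eigenvectorBasis.orthonormal.ne_zero j (by ext i; exact congrFun h i)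
    have : (ν j * ν j - ν j) • ⇑(hγ.eigenvectorBasis j) = 0 := by
      rw [sub_smul, hb2]; abel
    rcases smul_eq_zero.mp this with h | h
    · have : ν j * (ν j - 1) = 0 := by ring_nf; ring_nf at h; linarith
      rcases mul_eq_zero.mp this with h' | h'
      · exact Or.inl h'
      · exact Or.inr (by linarith)
    · exact absurd h hbne
  have hnonneg : ∀ j, 0 ≤ ν j := fun j => by rcases h01 j with h | h <;> simp [h]
  have hsum : ∑ j, ν j = 1 := by
    have := herm_trace hγ
    rw [htr] at this
    have := congrArg Complex.re this
    simpa using this.symm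
  obtain ⟨j₀, hj₀⟩ : ∃ j₀, ν j₀ = 1 := by
    by_contra h
    push_neg at h
    have : ∀ j, ν j = 0 := fun j => (h01 j).resolve_right (h j)
    simp [this] at hsum
  have huniq : ∀ j, j ≠ j₀ → ν j = 0 := by
    intro j hj
    rcases h01 j with h | h
    · exact h
    · exfalso
      have h2 : ν j + ν j₀ ≤ ∑ i, ν i :=
        Finset.add_le_sum (fun i _ => hnonneg i) (Finset.mem_univ _) (Finset.mem_univ _) hj
      rw [h, hj₀, hsum] at h2
      linarith
  have hd : (RCLike.ofReal ∘ ν : m → ℂ) = Pi.single j₀ 1 := by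
    funext j
    by_cases hj : j = j₀
    · subst hj; simp [hj₀]
    · simp [Pi.single_eq_of_ne hj, huniq j hj]
  refine ⟨fun i => (hγ.eigenvectorUnitary : Matrix m m ℂ) i j₀, fun x => ?_⟩
  set U := (hγ.eigenvectorUnitary : Matrix m m ℂ)
  conv_lhs => rw [hγ.spectral_theorem, Unitary.conjStarAlgAut_apply, hd]
  rw [← Matrix.mulVec_mulVec, ← Matrix.mulVec_mulVec]
  have hdiag : diagonal (Pi.single j₀ (1:ℂ)) *ᵥ (star U *ᵥ x)
      = Pi.single j₀ ((star U *ᵥ x) j₀) := by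
    funext i
    by_cases hi : i = j₀
    · subst hi; simp [Matrix.mulVec_diagonal]
    · simp [Matrix.mulVec_diagonal, Pi.single_eq_of_ne hi]
  rw [hdiag]
  funext i
  simp only [Matrix.mulVec_single, Pi.smul_apply, smul_eq_mul]
  rw [mul_comm]
  congr 1

private lemma no_two_neg {X γ : Matrix m m ℂ} (hX : X.IsHermitian)
    (hψ : ∃ ψ : m → ℂ, ∀ x, γ *ᵥ x = (star ψ ⬝ᵥ x) • ψ)
    (hPSD : (X + γ).PosSemidef) :
    ∀ i j, i ≠ j → hX.eigenvalues i < 0 → hX.eigenvalues j < 0 → False := by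
  intro i j hij hi hj
  obtain ⟨ψ, hγ⟩ := hψ
  have horth := orthonormal_iff_ite.mp hX.eigenvectorBasis.orthonormal
  have hvw : ∀ a b : m, dotProduct (star ⇑(hX.eigenvectorBasis a)) ⇑(hX.eigenvectorBasis b)
      = if a = b then 1 else 0 := fun a b => by
        rw [← horth a b, EuclideanSpace.inner_eq_star_dotProduct, dotProduct_comm]
  set μ := hX.eigenvalues with hμ
  set v := ⇑(hX.eigenvectorBasis i) with hv
  set w := ⇑(hX.eigenvectorBasis j) with hw
  have hvv : star v ⬝ᵥ v = 1 := by simpa using hvw i i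
  have hww : star w ⬝ᵥ w = 1 := by simpa using hvw j j
  have hvw1 : star v ⬝ᵥ w = 0 := by simpa [hij] using hvw i j
  have hwv : star w ⬝ᵥ v = 0 := by simpa [hij.symm] using hvw j i
  obtain ⟨s, t, hst, hlin⟩ : ∃ s t : ℂ, ¬(s = 0 ∧ t = 0) ∧
      s * (star ψ ⬝ᵥ v) + t * (star ψ ⬝ᵥ w) = 0 := by
    by_cases ha : (star ψ ⬝ᵥ v) = 0
    · exact ⟨1, 0, by simp, by simp [ha]⟩
    · exact ⟨star ψ ⬝ᵥ w, -(star ψ ⬝ᵥ v), fun h => ha (neg_eq_zero.mp h.2), by ring⟩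
  set u : m → ℂ := s • v + t • w with hu
  have hγu : γ *ᵥ u = 0 := by
    rw [hγ]
    have : star ψ ⬝ᵥ u = 0 := by
      simp only [hu, dotProduct_add, dotProduct_smul, smul_eq_mul]
      exact hlin
    rw [this, zero_smul]
  have hXu : X *ᵥ u = (s * (μ i : ℂ)) • v + (t * (μ j : ℂ)) • w := by
    simp only [hu, hv, hw, Matrix.mulVec_add, Matrix.mulVec_smul, hX.mulVec_eigenvectorBasis]
    rw [← hv, ← hw, ← hμ]
    funext x
    simp [Complex.real_smul]
    ring
  have hpos := hPSD.dotProduct_mulVec_nonneg u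
  rw [Matrix.add_mulVec, hγu, add_zero, hXu] at hpos
  have hcalc : star u ⬝ᵥ ((s * (μ i : ℂ)) • v + (t * (μ j : ℂ)) • w)
      = ((Complex.normSq s * μ i + Complex.normSq t * μ j : ℝ) : ℂ) := by
    simp only [hu, star_add, star_smul, add_dotProduct, dotProduct_add,
      smul_dotProduct, dotProduct_smul, smul_eq_mul, hvv, hww, hvw1, hwv,
      mul_zero, mul_one, add_zero, zero_add]
    have hns : ∀ z : ℂ, (Complex.normSq z : ℂ) = z * star z := fun z => (Complex.mul_conj z).symm
    push_cast [hns]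
    ring
  rw [hcalc] at hpos
  have hre : (0:ℝ) ≤ Complex.normSq s * μ i + Complex.normSq t * μ j := by
    have := (Complex.le_def.mp hpos).1
    simpa using this
  have h1 : Complex.normSq s * μ i ≤ 0 :=
    mul_nonpos_iff.mpr (Or.inl ⟨Complex.normSq_nonneg s, hi.le⟩)
  have h2 : Complex.normSq t * μ j ≤ 0 :=
    mul_nonpos_iff.mpr (Or.inl ⟨Complex.normSq_nonneg t, hj.le⟩)
  rcases not_and_or.mp hst with hs | ht
  · have : Complex.normSq s * μ i < 0 :=
      mul_neg_of_pos_of_neg (Complex.normSq_pos.mpr hs) hi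
    linarith
  · have : Complex.normSq t * μ j < 0 :=
      mul_neg_of_pos_of_neg (Complex.normSq_pos.mpr ht) hj
    linarith

private lemma trace_conj_unitary (U : Matrix.unitaryGroup m ℂ) (P : Matrix m m ℂ) :
    ((U : Matrix m m ℂ) * P * star (U : Matrix m m ℂ)).trace = P.trace := by
  rw [trace_mul_cycle, (Matrix.mem_unitaryGroup_iff').mp U.2, one_mul]

private lemma psd_diag_re_nonneg {B : Matrix m m ℂ} (hB : B.PosSemidef) (i : m) :
    0 ≤ (B i i).re := by
  have h := hB.dotProduct_mulVec_nonneg (Pi.single i 1)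
  have hBi : star (Pi.single i (1:ℂ)) ⬝ᵥ (B *ᵥ Pi.single i 1) = B i i := by
    simp [dotProduct, Matrix.mulVec_single, Pi.single_apply, apply_ite, mul_comm]
  rw [hBi] at h
  exact (Complex.le_def.mp h).1

private lemma psd_trace_re_nonneg {B : Matrix m m ℂ} (hB : B.PosSemidef) :
    0 ≤ (B.trace).re := by
  rw [Matrix.trace, Complex.re_sum]
  exact Finset.sum_nonneg fun i _ => psd_diag_re_nonneg hB i

end Helpers

theorem knowles_pickl_trace_norm_bounds {n : ℕ}
    (γ Γ : Matrix (Fin (n + 1)) (Fin (n + 1)) ℂ)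
    (hγherm : γᴴ = γ) (hγidem : γ * γ = γ) (hγtr : γ.trace = 1)
    (hΓ : Γ.PosSemidef) (hΓtr : Γ.trace = 1)
    (α : ℝ) (hα : α = ((1 - γ) * Γ).trace.re) :
    α ≤ traceNorm (Γ - γ) ∧ traceNorm (Γ - γ) ≤ 2 * Real.sqrt (2 * α) := by
  set X := Γ - γ with hXdef
  have hXh : X.IsHermitian := hΓ.1.sub hγherm
  set μ := hXh.eigenvalues with hμ
  set M : Matrix (Fin (n+1)) (Fin (n+1)) ℂ := 1 - γ with hMdef
  have hMherm : Mᴴ = M := by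
    rw [hMdef, Matrix.conjTranspose_sub, Matrix.conjTranspose_one, hγherm]
  have hMidem : M * M = M := by
    rw [hMdef, sub_mul, one_mul, mul_sub, mul_one, hγidem]
    abel
  have hMpsd : M.PosSemidef := by
    have : Mᴴ * M = M := by rw [hMherm, hMidem]
    exact this ▸ Matrix.posSemidef_conjTranspose_mul_self M
  have hγpsd : γ.PosSemidef := by
    have : γᴴ * γ = γ := by rw [hγherm, hγidem]
    exact this ▸ Matrix.posSemidef_conjTranspose_mul_self γ
  -- α = Re tr(M * X)
  have hMγ : M * γ = 0 := by
    rw [hMdef, sub_mul, one_mul, hγidem, sub_self]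
  have hαX : α = ((M * X).trace).re := by
    rw [hα, hXdef, mul_sub, Matrix.trace_sub, hMγ, Matrix.trace_zero, sub_zero, hMdef]
  -- trace of X is zero
  have htrX : X.trace = 0 := by
    rw [hXdef, Matrix.trace_sub, hΓtr, hγtr, sub_self]
  have hsum0 : ∑ i, μ i = 0 := by
    have h := herm_trace hXh
    rw [htrX] at h
    have := congrArg Complex.re h.symm
    simpa [Complex.re_sum] using this
  -- α is nonneg
  have hαnn : 0 ≤ α := by
    have hMΓM : (M * Γ * Mᴴ).PosSemidef := hΓ.mul_mul_conjTranspose_same M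
    have htr2 : (M * Γ * Mᴴ).trace = (M * Γ).trace := by
      rw [hMherm, trace_mul_cycle, hMidem]
    rw [hα, ← htr2]
    exact psd_trace_re_nonneg hMΓM
  -- sum of squares bound: ∑ μ² ≤ 2α
  have hγΓre : ((γ * Γ).trace).re = 1 - α := by
    have hone : ((1 : Matrix (Fin (n+1)) (Fin (n+1)) ℂ) * Γ).trace = 1 := by rw [one_mul, hΓtr]
    have : ((1 - γ) * Γ).trace = 1 - (γ * Γ).trace := by
      rw [sub_mul, Matrix.trace_sub, hone]
    rw [hα, this]
    simp
  have hΓsq : ((Γ * Γ).trace).re ≤ 1 := by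
    have h := herm_sq_trace hΓ.1
    have hν := hΓ.eigenvalues_nonneg
    have hsν : ∑ i, hΓ.1.eigenvalues i = 1 := by
      have h2 := herm_trace hΓ.1
      rw [hΓtr] at h2
      have := congrArg Complex.re h2.symm
      simpa [Complex.re_sum] using this
    have : ((Γ * Γ).trace).re = ∑ i, (hΓ.1.eigenvalues i) ^ 2 := by
      rw [h, Complex.re_sum]
      simp [← Complex.ofReal_pow]
    rw [this]
    calc ∑ i, (hΓ.1.eigenvalues i) ^ 2 ≤ ∑ i, hΓ.1.eigenvalues i := by
          apply Finset.sum_le_sum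
          intro i _
          have hle1 : hΓ.1.eigenvalues i ≤ 1 := by
            rw [← hsν]
            exact Finset.single_le_sum (fun j _ => hν j) (Finset.mem_univ i)
          nlinarith [hν i]
      _ = 1 := hsν
  have hsumsq : ∑ i, (μ i) ^ 2 ≤ 2 * α := by
    have hXX : (X * X).trace = (Γ * Γ).trace - 2 * (γ * Γ).trace + 1 := by
      rw [hXdef]
      rw [sub_mul, mul_sub, mul_sub]
      rw [Matrix.trace_sub, Matrix.trace_sub, Matrix.trace_sub, hγidem, hγtr]
      rw [Matrix.trace_mul_comm Γ γ]
      ring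
    have h := herm_sq_trace hXh
    have : ∑ i, (μ i) ^ 2 = ((X * X).trace).re := by
      rw [h, Complex.re_sum]
      simp [← Complex.ofReal_pow, hμ]
    rw [this, hXX]
    have : ((Γ * Γ).trace - 2 * (γ * Γ).trace + 1).re
        = ((Γ * Γ).trace).re - 2 * ((γ * Γ).trace).re + 1 := by
      simp
    rw [this, hγΓre]
    linarith
  -- trace norm = sum of |μ|
  have hTN : traceNorm X = ∑ i, |μ i| := traceNorm_herm hXh
  -- lower bound
  have hlower : α ≤ ∑ i, |μ i| := by
    set U := hXh.eigenvectorUnitary with hU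
    set B : Matrix (Fin (n+1)) (Fin (n+1)) ℂ := star (U : Matrix (Fin (n+1)) (Fin (n+1)) ℂ) * M * (U : Matrix (Fin (n+1)) (Fin (n+1)) ℂ) with hB
    set C : Matrix (Fin (n+1)) (Fin (n+1)) ℂ := star (U : Matrix (Fin (n+1)) (Fin (n+1)) ℂ) * γ * (U : Matrix (Fin (n+1)) (Fin (n+1)) ℂ) with hC
    have hBpsd : B.PosSemidef := by
      have := hMpsd.conjTranspose_mul_mul_same (U : Matrix (Fin (n+1)) (Fin (n+1)) ℂ)
      simpa [Matrix.star_eq_conjTranspose, hB] using this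
    have hCpsd : C.PosSemidef := by
      have := hγpsd.conjTranspose_mul_mul_same (U : Matrix (Fin (n+1)) (Fin (n+1)) ℂ)
      simpa [Matrix.star_eq_conjTranspose, hC] using this
    have hBC : B + C = 1 := by
      have h1 : star (U : Matrix (Fin (n+1)) (Fin (n+1)) ℂ) * (U : Matrix (Fin (n+1)) (Fin (n+1)) ℂ) = 1 :=
        (Matrix.mem_unitaryGroup_iff').mp U.2
      rw [hB, hC, ← add_mul, ← mul_add]
      have : M + γ = 1 := by rw [hMdef]; abel
      rw [this, mul_one, h1]
    have hdiag : ∀ i, 0 ≤ (B i i).re ∧ (B i i).re ≤ 1 := by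
      intro i
      refine ⟨psd_diag_re_nonneg hBpsd i, ?_⟩
      have h1 : (B i i).re + (C i i).re = 1 := by
        have := congrArg (fun Z : Matrix (Fin (n+1)) (Fin (n+1)) ℂ => (Z i i).re) hBC
        simpa using this
      have := psd_diag_re_nonneg hCpsd i
      linarith
    -- tr(M X) = tr(B * D)
    have hMconj : M = (U : Matrix (Fin (n+1)) (Fin (n+1)) ℂ) * B * star (U : Matrix (Fin (n+1)) (Fin (n+1)) ℂ) := by
      have h2 : (U : Matrix (Fin (n+1)) (Fin (n+1)) ℂ) * star (U : Matrix (Fin (n+1)) (Fin (n+1)) ℂ) = 1 :=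
        (Matrix.mem_unitaryGroup_iff).mp U.2
      rw [hB]
      simp only [← mul_assoc]
      rw [h2, one_mul, mul_assoc, h2, mul_one]
    have hMX : (M * X).trace = ∑ i, B i i * ((μ i : ℝ) : ℂ) := by
      conv_lhs => rw [hMconj, hXh.spectral_theorem, Unitary.conjStarAlgAut_apply, conj_mul_conj]
      rw [trace_conj_unitary, Matrix.trace]
      simp [Matrix.diag, Matrix.mul_diagonal, Function.comp, hμ]
    have hαsum : α = ∑ i, μ i * (B i i).re := by
      rw [hαX, hMX, Complex.re_sum]
      apply Finset.sum_congr rfl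
      intro i _
      simp [Complex.mul_re]
      ring
    rw [hαsum]
    apply Finset.sum_le_sum
    intro i _
    rcases le_or_gt 0 (μ i) with h | h
    · calc μ i * (B i i).re ≤ μ i * 1 := mul_le_mul_of_nonneg_left (hdiag i).2 h
        _ = |μ i| := by rw [mul_one, abs_of_nonneg h]
    · have : μ i * (B i i).re ≤ 0 := mul_nonpos_iff.mpr (Or.inr ⟨h.le, (hdiag i).1⟩)
      exact this.trans (abs_nonneg _)
  -- upper bound
  have hub : ∑ i, |μ i| ≤ 2 * Real.sqrt (2 * α) := by
    by_cases hneg : ∃ i₀, μ i₀ < 0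
    · obtain ⟨i₀, hi₀⟩ := hneg
      have honeneg : ∀ j, j ≠ i₀ → 0 ≤ μ j := by
        intro j hj
        by_contra h
        push_neg at h
        have hXγ : X + γ = Γ := by rw [hXdef]; abel
        exact no_two_neg hXh (proj_mulVec hγherm hγidem hγtr)
          (hXγ ▸ hΓ) j i₀ hj h hi₀
      have hsplit : ∑ i, |μ i| = |μ i₀| + ∑ j ∈ Finset.univ.erase i₀, |μ j| :=
        (Finset.add_sum_erase _ _ (Finset.mem_univ i₀)).symm
      have herase : ∑ j ∈ Finset.univ.erase i₀, |μ j| = ∑ j ∈ Finset.univ.erase i₀, μ j := by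
        apply Finset.sum_congr rfl
        intro j hj
        exact abs_of_nonneg (honeneg j (Finset.ne_of_mem_erase hj))
      have hsum' : μ i₀ + ∑ j ∈ Finset.univ.erase i₀, μ j = 0 := by
        rw [Finset.add_sum_erase _ _ (Finset.mem_univ i₀)]
        exact hsum0
      have htotal : ∑ i, |μ i| = -2 * μ i₀ := by
        rw [hsplit, herase, abs_of_neg hi₀]
        linarith
      have hsq2 : (μ i₀)^2 ≤ 2 * α :=
        le_trans (Finset.single_le_sum (fun j _ => sq_nonneg (μ j)) (Finset.mem_univ i₀)) hsumsq
      have hroot : -μ i₀ ≤ Real.sqrt (2 * α) := by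
        have h1 : -μ i₀ = Real.sqrt ((μ i₀)^2) := by
          rw [Real.sqrt_sq_eq_abs, abs_of_neg hi₀]
        rw [h1]
        exact Real.sqrt_le_sqrt hsq2
      rw [htotal]
      linarith
    · push_neg at hneg
      have : ∑ i, |μ i| = ∑ i, μ i := Finset.sum_congr rfl fun i _ => abs_of_nonneg (hneg i)
      rw [this, hsum0]
      positivity
  rw [hTN]
  exact ⟨hlower, hub⟩
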